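/- Let n ≥ 3 and let v = (v_0,…,v_{n-1}) ∈ F₂ⁿ satisfy v_0 = v_{n-1} = 1. Let P be the σ_PRR-orbit of v (a PCR-type cycle) and let C be the σ_PRR-orbit of the companion state ṽ = (v_0,…,v_{n-2}, 0). Then C is a CCR-type cycle distinct from P, and the cycle representative of C is lexicographically smaller than the cycle representative of P. -/

import Mathlib

attribute [local instance] Classical.propDecidable

abbrev F2 := ZMod 2

/-- Coordinate access with default value `0` outside the range. -/
noncomputable def get {n : ℕ} (c : Fin n → F2) (j : ℕ) : F2 :=
  if h : j < n then c ⟨j, h⟩ else 0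

/-- Lexicographic order on binary tuples (coordinates compared from index 0, with 0 < 1). -/
def lexLe {m : ℕ} (v w : Fin m → F2) : Prop :=
  ∀ j : Fin m, (∀ i : Fin m, i < j → v i = w i) → (v j).val ≤ (w j).val

def lexLt {m : ℕ} (v w : Fin m → F2) : Prop := lexLe v w ∧ v ≠ w

/-- Left cyclic rotation by `r`. -/
def rot {m : ℕ} (r : ℕ) (w : Fin m → F2) : Fin m → F2 :=
  fun i => w ⟨((i : ℕ) + r) % m, Nat.mod_lt _ i.pos⟩

/-- `w` is lexicographically minimal among its cyclic rotations. -/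
def IsNecklace {m : ℕ} (w : Fin m → F2) : Prop := ∀ r : ℕ, lexLe w (rot r w)

/-- `w` followed by its coordinatewise complement. -/
def complAppend {m : ℕ} (w : Fin m → F2) : Fin (2 * m) → F2 :=
  fun i => if h : (i : ℕ) < m then w ⟨(i : ℕ), h⟩
           else w ⟨(i : ℕ) - m, by have := i.isLt; omega⟩ + 1

def IsCoNecklace {m : ℕ} (w : Fin m → F2) : Prop := IsNecklace (complAppend w)

/-- The last `n-1` coordinates of an `n`-stage state. -/
def stTail {n : ℕ} (c : Fin n → F2) : Fin (n - 1) → F2 :=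
  fun i => c ⟨(i : ℕ) + 1, by have := i.isLt; omega⟩

/-- The state map of a successor rule/feedback function:
`(c_0,…,c_{n-1}) ↦ (c_1,…,c_{n-1}, ρ(c))`. -/
def nextMap {n : ℕ} (ρ : (Fin n → F2) → F2) (c : Fin n → F2) : Fin n → F2 :=
  fun i => if h : (i : ℕ) + 1 < n then c ⟨(i : ℕ) + 1, h⟩ else ρ c

/-- Feedback of the pure run-length register: `c_0 + c_1 + c_{n-1}`. -/
noncomputable def fPRR {n : ℕ} (c : Fin n → F2) : F2 :=
  get c 0 + get c 1 + get c (n - 1)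

/-- The successor rule `ρ` generates a de Bruijn sequence of order `n`,
i.e. all `2^n` states lie in a single orbit of its state map. -/
def generatesDB {n : ℕ} (ρ : (Fin n → F2) → F2) : Prop :=
  ∀ x y : Fin n → F2, ∃ k : ℕ, (nextMap ρ)^[k] x = y

def inOrbit {α : Type*} (σ : α → α) (v w : α) : Prop := ∃ k : ℕ, σ^[k] v = w

def orbit {α : Type*} (σ : α → α) (v : α) : Set α := {w | inOrbit σ v w}

/-- `v` is the cycle representative (the lexicographically least state) of its orbit. -/
def isCycleRep {m : ℕ} (σ : (Fin m → F2) → (Fin m → F2)) (v : Fin m → F2) : Prop :=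
  ∀ w ∈ orbit σ v, lexLe v w

/-- Hamming weight. -/
noncomputable def wt {m : ℕ} (u : Fin m → F2) : ℕ :=
  (Finset.univ.filter (fun j : Fin m => u j = 1)).card

/-- The operator `Λ`: cyclically shift a nonzero tuple so that its first `1`
moves to the end (identity on the zero tuple). -/
noncomputable def Lam {m : ℕ} (u : Fin m → F2) : Fin m → F2 :=
  if h : (Finset.univ.filter (fun j : Fin m => u j = 1)).Nonempty then
    rot (((Finset.univ.filter (fun j : Fin m => u j = 1)).min' h).val + 1) u
  else u

/-- The operator `Θ`: if `j ≥ 1` is the least index (0-based) with `u j = 0`,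
rotate left by `j`; fixes tuples with no such index. -/
noncomputable def Theta {m : ℕ} (u : Fin m → F2) : Fin m → F2 :=
  if h : (Finset.univ.filter (fun j : Fin m => 0 < (j : ℕ) ∧ u j = 0)).Nonempty then
    rot ((Finset.univ.filter (fun j : Fin m => 0 < (j : ℕ) ∧ u j = 0)).min' h).val u
  else u

/-- Conjugate state: first bit complemented. -/
def conjSt {n : ℕ} (v : Fin n → F2) : Fin n → F2 :=
  fun i => if (i : ℕ) = 0 then v i + 1 else v i

/-- Companion state: last bit complemented. -/
def compSt {n : ℕ} (v : Fin n → F2) : Fin n → F2 :=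
  fun i => if (i : ℕ) + 1 = n then v i + 1 else v i

/-- `(c_1,…,c_{n-1}, b)`. -/
def shiftIn {n : ℕ} (c : Fin n → F2) (b : F2) : Fin n → F2 :=
  fun i => if h : (i : ℕ) + 1 < n then c ⟨(i : ℕ) + 1, h⟩ else b

/-- `lcm(1,2,…,m)`. -/
def lcmUpTo (m : ℕ) : ℕ := (Finset.Icc 1 m).lcm id

/-- Admissible parameters `1 = k_1 < k_2 < … < k_t = n`, `k_{t-1} < n-1`, `2 ≤ t ≤ n-1`,
for the rules `Ψ₁` and `Υ₁` (the values `k 1, …, k t` of `k : ℕ → ℕ`). -/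
def validParams (n t : ℕ) (k : ℕ → ℕ) : Prop :=
  2 ≤ t ∧ t ≤ n - 1 ∧ k 1 = 1 ∧ k t = n ∧
  (∀ i : ℕ, 1 ≤ i → i < t → k i < k (i + 1)) ∧ k (t - 1) < n - 1

/-- The successor rule `Ψ₁` of Theorem 3.2. -/
noncomputable def Psi1Rule {n : ℕ} (t : ℕ) (k : ℕ → ℕ) (c : Fin n → F2) : F2 :=
  if (get c 1 = 0 ∧ IsCoNecklace (stTail c)) ∨
     (get c 1 = 1 ∧ ∃ i : ℕ, 1 ≤ i ∧ i < t ∧ k i ≤ wt (stTail c) ∧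
        wt (stTail c) < k (i + 1) ∧ IsNecklace (Lam^[k i] (stTail c)))
  then fPRR c + 1 else fPRR c

/-- The successor rule `Ψ₂` of Theorem 3.4. -/
noncomputable def Psi2Rule {n : ℕ} (k : ℕ) (c : Fin n → F2) : F2 :=
  if (get c 1 = 0 ∧ IsCoNecklace (stTail c)) ∨
     (get c 1 = 1 ∧ IsNecklace (Lam^[k] (stTail c)))
  then fPRR c + 1 else fPRR c

/-- `y_c = (c̄_1,…,c̄_{n-2}, 0) ∈ F₂^{n-1}`. -/
noncomputable def yState {n : ℕ} (c : Fin n → F2) : Fin (n - 1) → F2 :=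
  fun i => if (i : ℕ) < n - 2 then get c ((i : ℕ) + 1) + 1 else 0

/-- `w_c = (0, c_1,…,c_{n-2}) ∈ F₂^{n-1}`. -/
noncomputable def wState {n : ℕ} (c : Fin n → F2) : Fin (n - 1) → F2 :=
  fun i => if (i : ℕ) = 0 then 0 else get c (i : ℕ)

/-- The successor rule `Υ₁` of Theorem 4.2. -/
noncomputable def Ups1Rule {n : ℕ} (t : ℕ) (k : ℕ → ℕ) (c : Fin n → F2) : F2 :=
  if (get c (n - 1) = 1 ∧ IsCoNecklace (yState c)) ∨
     (get c (n - 1) = 0 ∧ ∃ i : ℕ, 1 ≤ i ∧ i < t ∧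
        k i ≤ wt (fun j => wState c j + 1) ∧ wt (fun j => wState c j + 1) < k (i + 1) ∧
        IsNecklace (Theta^[k i - 1] (wState c)))
  then fPRR c + 1 else fPRR c

/-- The successor rule `Υ₂` of Theorem 4.3. -/
noncomputable def Ups2Rule {n : ℕ} (k : ℕ) (c : Fin n → F2) : F2 :=
  if (get c (n - 1) = 1 ∧ IsCoNecklace (yState c)) ∨
     (get c (n - 1) = 0 ∧ IsNecklace (Theta^[k] (wState c)))
  then fPRR c + 1 else fPRR c

/-- `x_c` of Theorem 4.1: `(0,c_1,…,c_{n-1})` if `c_{n-1}=0`,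
and `(c̄_1,…,c̄_{n-2},0,c_1)` if `c_{n-1}=1`. -/
noncomputable def xState {n : ℕ} (c : Fin n → F2) : Fin n → F2 :=
  if get c (n - 1) = 0 then (fun i => if (i : ℕ) = 0 then 0 else c i)
  else fun i => if (i : ℕ) < n - 2 then get c ((i : ℕ) + 1) + 1
       else if (i : ℕ) = n - 2 then 0 else get c 1

section Aux17

lemma F2cases (a : F2) : a = 0 ∨ a = 1 := by revert a; decide

lemma app_congr {n : ℕ} (c : Fin n → F2) {a b : ℕ} (pa : a < n) (pb : b < n) (h : a = b) :
    c ⟨a, pa⟩ = c ⟨b, pb⟩ := by subst h; rfl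

lemma lexLe_refl {n : ℕ} (v : Fin n → F2) : lexLe v v := fun _ _ => le_refl _

lemma lexLt_of_firstDiff {n : ℕ} {v w : Fin n → F2} (j : Fin n)
    (hpre : ∀ i : Fin n, i < j → v i = w i) (hv : v j = 0) (hw : w j = 1) : lexLt v w := by
  constructor
  · intro j' h
    rcases lt_trichotomy j' j with hlt | rfl | hgt
    · rw [hpre j' hlt]
    · rw [hv, hw]; decide
    · rw [h j hgt, hw] at hv; exact absurd hv (by decide)
  · intro he; rw [he] at hv; rw [hv] at hw; exact absurd hw (by decide)

lemma lexLe_iff {n : ℕ} (v w : Fin n → F2) : lexLe v w ↔ v = w ∨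
    ∃ j : Fin n, (∀ i : Fin n, i < j → v i = w i) ∧ v j = 0 ∧ w j = 1 := by
  constructor
  · intro h
    by_cases hvw : v = w
    · exact Or.inl hvw
    right
    have hne : ∃ j : Fin n, v j ≠ w j := by
      by_contra hc; push_neg at hc; exact hvw (funext hc)
    classical
    set S := Finset.univ.filter (fun j : Fin n => v j ≠ w j) with hSdef
    have hS : S.Nonempty := by obtain ⟨j, hj⟩ := hne; exact ⟨j, by simp [hSdef, hj]⟩
    set j := S.min' hS with hjdef
    have hjS : j ∈ S := S.min'_mem hS
    have hjne : v j ≠ w j := by simpa [hSdef] using hjS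
    have hpre : ∀ i : Fin n, i < j → v i = w i := by
      intro i hi
      by_contra hic
      exact absurd (S.min'_le i (by simp [hSdef, hic])) (not_le.mpr hi)
    have hle := h j hpre
    refine ⟨j, hpre, ?_⟩
    rcases F2cases (v j) with h1 | h1 <;> rcases F2cases (w j) with h2 | h2 <;>
      rw [h1, h2] at hjne hle <;> simp_all
  · rintro (rfl | ⟨j, hpre, hv, hw⟩)
    · exact lexLe_refl v
    · exact (lexLt_of_firstDiff j hpre hv hw).1

lemma lexLe_trans {n : ℕ} {v w x : Fin n → F2} (h1 : lexLe v w) (h2 : lexLe w x) :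
    lexLe v x := by
  rw [lexLe_iff] at h1 h2 ⊢
  rcases h1 with rfl | ⟨j1, p1, a1, b1⟩
  · exact h2
  rcases h2 with rfl | ⟨j2, p2, a2, b2⟩
  · exact Or.inr ⟨j1, p1, a1, b1⟩
  right
  rcases lt_trichotomy j1 j2 with h | h | h
  · exact ⟨j1, fun i hi => (p1 i hi).trans (p2 i (hi.trans h)), a1,
      by rw [← p2 j1 h]; exact b1⟩
  · subst h
    exact ⟨j1, fun i hi => (p1 i hi).trans (p2 i hi), a1, b2⟩
  · exact ⟨j2, fun i hi => (p1 i (hi.trans h)).trans (p2 i hi), (p1 j2 h).trans a2, b2⟩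

lemma lexLe_total {n : ℕ} (v w : Fin n → F2) : lexLe v w ∨ lexLe w v := by
  by_cases hvw : v = w
  · exact Or.inl (hvw ▸ lexLe_refl v)
  have hne : ∃ j : Fin n, v j ≠ w j := by
    by_contra hc; push_neg at hc; exact hvw (funext hc)
  classical
  set S := Finset.univ.filter (fun j : Fin n => v j ≠ w j) with hSdef
  have hS : S.Nonempty := by obtain ⟨j, hj⟩ := hne; exact ⟨j, by simp [hSdef, hj]⟩
  set j := S.min' hS with hjdef
  have hjne : v j ≠ w j := by simpa [hSdef] using S.min'_mem hS
  have hpre : ∀ i : Fin n, i < j → v i = w i := by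
    intro i hi
    by_contra hic
    exact absurd (S.min'_le i (by simp [hSdef, hic])) (not_le.mpr hi)
  rcases F2cases (v j) with h1 | h1 <;> rcases F2cases (w j) with h2 | h2
  · exact absurd (h1.trans h2.symm) hjne
  · exact Or.inl (lexLt_of_firstDiff j hpre h1 h2).1
  · exact Or.inr (lexLt_of_firstDiff j (fun i hi => (hpre i hi).symm) h2 h1).1
  · exact absurd (h1.trans h2.symm) hjne

lemma exists_lexMin {n : ℕ} (S : Finset (Fin n → F2)) (hS : S.Nonempty) :
    ∃ u ∈ S, ∀ b ∈ S, lexLe u b := by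
  classical
  induction S using Finset.induction_on with
  | empty => exact absurd hS (by simp)
  | @insert a S' ha ih =>
    by_cases hS' : S'.Nonempty
    · obtain ⟨u, hu, hmin⟩ := ih hS'
      rcases lexLe_total u a with h | h
      · refine ⟨u, Finset.mem_insert_of_mem hu, ?_⟩
        intro b hb
        rcases Finset.mem_insert.mp hb with rfl | hb'
        · exact h
        · exact hmin b hb'
      · refine ⟨a, Finset.mem_insert_self a S', ?_⟩
        intro b hb
        rcases Finset.mem_insert.mp hb with rfl | hb'
        · exact lexLe_refl b
        · exact lexLe_trans h (hmin b hb')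
    · rw [Finset.not_nonempty_iff_eq_empty] at hS'
      subst hS'
      refine ⟨a, Finset.mem_insert_self a ∅, ?_⟩
      intro b hb
      rcases Finset.mem_insert.mp hb with rfl | hb'
      · exact lexLe_refl b
      · exact absurd hb' (by simp)

end Aux17

section Iter

lemma fPRR_eq {n : ℕ} (hn : 3 ≤ n) (c : Fin n → F2) :
    fPRR c = c ⟨0, by omega⟩ + c ⟨1, by omega⟩ + c ⟨n-1, by omega⟩ := by
  have h0 : (0:ℕ) < n := by omega
  have h1 : (1:ℕ) < n := by omega
  have h2 : n - 1 < n := by omega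
  unfold fPRR _root_.get
  rw [dif_pos h0, dif_pos h1, dif_pos h2]

lemma PCR_iter {n : ℕ} (hn : 3 ≤ n) (c : Fin n → F2)
    (hc : c ⟨n-1, by omega⟩ = c ⟨0, by omega⟩) (j i : ℕ) (hi : i < n) :
    (nextMap fPRR)^[j] c ⟨i, hi⟩ =
      c ⟨(i % (n-1) + j) % (n-1), by
          have := Nat.mod_lt (i % (n-1) + j) (show 0 < n-1 by omega); omega⟩ := by
  have hm0 : 0 < n - 1 := by omega
  induction j generalizing i hi with
  | zero =>
    simp only [Function.iterate_zero, id_eq]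
    by_cases h : i < n - 1
    · symm
      apply app_congr
      rw [Nat.add_zero, Nat.mod_eq_of_lt (Nat.mod_lt _ hm0), Nat.mod_eq_of_lt h]
    · have hie : i = n - 1 := by omega
      refine (app_congr c hi (by omega) hie).trans (hc.trans (app_congr c _ _ ?_))
      rw [hie, Nat.add_zero, Nat.mod_eq_of_lt (Nat.mod_lt _ hm0), Nat.mod_self]
  | succ j ih =>
    rw [Function.iterate_succ_apply']
    show (if h : i + 1 < n then ((nextMap fPRR)^[j] c) ⟨i+1, h⟩ else fPRR ((nextMap fPRR)^[j] c)) = _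
    by_cases h : i + 1 < n
    · rw [dif_pos h, ih (i+1) h]
      apply app_congr
      rw [Nat.mod_add_mod, Nat.mod_add_mod]
      congr 1
      omega
    · rw [dif_neg h]
      have hie : i = n - 1 := by omega
      rw [fPRR_eq hn, ih 0 (by omega), ih 1 (by omega), ih (n-1) (by omega)]
      have e1 : ((0:ℕ) % (n-1) + j) % (n-1) = ((n-1) % (n-1) + j) % (n-1) := by
        rw [Nat.zero_mod, Nat.mod_self]
      rw [app_congr c _ (Nat.lt_of_lt_of_le (Nat.mod_lt _ hm0) (Nat.sub_le n 1)) e1]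
      have key : ∀ a b : F2, a + b + a = b := by decide
      rw [key]
      apply app_congr
      rw [hie, Nat.mod_self, Nat.zero_add, Nat.mod_eq_of_lt (show (1:ℕ) < n-1 by omega),
        Nat.add_comm 1 j]

lemma CCR_iter {n : ℕ} (hn : 3 ≤ n) (c : Fin n → F2)
    (hc : c ⟨n-1, Nat.sub_lt (by omega) one_pos⟩ = c ⟨0, by omega⟩ + 1) (j i : ℕ) (hi : i < n) :
    (nextMap fPRR)^[j] c ⟨i, hi⟩ =
      c ⟨(i % (n-1) + j) % (n-1), by
          have := Nat.mod_lt (i % (n-1) + j) (show 0 < n-1 by omega); omega⟩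
        + (((i % (n-1) + j) / (n-1) : ℕ) : F2)
        + (if i = n - 1 then 1 else 0) := by
  have hm0 : 0 < n - 1 := by omega
  induction j generalizing i hi with
  | zero =>
    simp only [Function.iterate_zero, id_eq]
    by_cases h : i < n - 1
    · rw [if_neg (show ¬(i = n-1) by omega)]
      simp only [Nat.add_zero, Nat.mod_eq_of_lt h, Nat.div_eq_of_lt h, Nat.cast_zero, add_zero]
    · have hie : i = n - 1 := by omega
      subst hie
      rw [if_pos rfl]
      simp only [Nat.mod_self, Nat.zero_add, Nat.zero_mod, Nat.zero_div, Nat.cast_zero, add_zero]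
      exact hc
  | succ j ih =>
    rw [Function.iterate_succ_apply']
    show (if h : i + 1 < n then ((nextMap fPRR)^[j] c) ⟨i+1, h⟩ else fPRR ((nextMap fPRR)^[j] c)) = _
    by_cases h : i + 1 < n
    · rw [dif_pos h, ih (i+1) h]
      have hi' : i < n - 1 := by omega
      by_cases h2 : i + 1 < n - 1
      · rw [if_neg (show ¬(i+1 = n-1) by omega), if_neg (show ¬(i = n-1) by omega)]
        simp only [Nat.mod_eq_of_lt h2, Nat.mod_eq_of_lt hi',
          show i + 1 + j = i + (j+1) from by omega, Nat.cast_zero, add_zero]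
      · have hie : i + 1 = n - 1 := by omega
        rw [if_pos hie, if_neg (show ¬(i = n-1) by omega)]
        simp only [hie, Nat.mod_self, Nat.zero_add, Nat.mod_eq_of_lt hi',
          show i + (j+1) = j + (n-1) from by omega, Nat.add_mod_right,
          Nat.add_div_right _ hm0]
        push_cast
        ring
    · rw [dif_neg h]
      have hie : i = n - 1 := by omega
      subst hie
      rw [fPRR_eq hn, ih 0 (by omega), ih 1 (by omega), ih (n-1) (by omega)]
      rw [if_neg (show ¬((0:ℕ) = n-1) by omega), if_neg (show ¬((1:ℕ) = n-1) by omega),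
        if_pos (rfl : n-1 = n-1)]
      simp only [Nat.zero_mod, Nat.zero_add, Nat.mod_self,
        Nat.mod_eq_of_lt (show (1:ℕ) < n-1 by omega), Nat.add_comm 1 j, add_zero]
      have key : ∀ a x b : F2, (a + x) + b + (a + x + 1) = b + 1 := by decide
      exact key _ _ _

end Iter

lemma get_eq {n : ℕ} (c : Fin n → F2) (j : ℕ) (h : j < n) : get c j = c ⟨j, h⟩ := by
  unfold _root_.get; rw [dif_pos h]

/-- for a state `v` with `v_0 = v_{n-1} = 1`, the companion state lies in a
CCR-type cycle distinct from the (PCR-type) cycle of `v`, and the cycle representative of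
that CCR-type cycle is lexicographically smaller than that of the cycle of `v`. -/
theorem pcr_cycle_adjacent_smaller_ccr (n : ℕ) (hn : 3 ≤ n) (v : Fin n → F2)
    (h0 : get v 0 = 1) (h1 : get v (n - 1) = 1) :
    orbit (nextMap (n := n) fPRR) (compSt v) ≠ orbit (nextMap (n := n) fPRR) v ∧
    (∀ w ∈ orbit (nextMap (n := n) fPRR) (compSt v), get w 0 ≠ get w (n - 1)) ∧
    ∃ rC rP : Fin n → F2,
      rC ∈ orbit (nextMap (n := n) fPRR) (compSt v) ∧ isCycleRep (nextMap (n := n) fPRR) rC ∧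
      rP ∈ orbit (nextMap (n := n) fPRR) v ∧ isCycleRep (nextMap (n := n) fPRR) rP ∧
      lexLt rC rP := by
  classical
  have hm0 : 0 < n - 1 := by omega
  set σ := nextMap (n := n) fPRR with hσ
  have hv0 : v ⟨0, by omega⟩ = 1 := by
    rw [get_eq v 0 (by omega)] at h0; exact h0
  have hvm : v ⟨n-1, Nat.sub_lt (by omega) one_pos⟩ = 1 := by
    rw [get_eq v (n-1) (by omega)] at h1; exact h1
  have hcc : compSt v ⟨n-1, Nat.sub_lt (by omega) one_pos⟩ = compSt v ⟨0, by omega⟩ + 1 := by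
    simp only [compSt]
    rw [if_pos (show n-1+1 = n by omega), if_neg (show ¬((0:ℕ)+1 = n) by omega)]
    rw [hvm, hv0]
  have hcompLt : ∀ (x : ℕ) (hx : x < n - 1), compSt v ⟨x, by omega⟩ = v ⟨x, by omega⟩ := by
    intro x hx
    simp only [compSt]
    rw [if_neg (show ¬(x+1 = n) by omega)]
  have hCC : ∀ (j x : ℕ) (hx : x < n),
      σ^[j] (compSt v) ⟨x, hx⟩ =
        v ⟨(x % (n-1) + j) % (n-1), by have := Nat.mod_lt (x % (n-1) + j) hm0; omega⟩
          + (((x % (n-1) + j) / (n-1) : ℕ) : F2) + (if x = n-1 then 1 else 0) := by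
    intro j x hx
    rw [hσ, CCR_iter hn (compSt v) hcc j x hx, hcompLt _ (Nat.mod_lt _ hm0)]
  have hPC : ∀ (j x : ℕ) (hx : x < n),
      σ^[j] v ⟨x, hx⟩ =
        v ⟨(x % (n-1) + j) % (n-1), by have := Nat.mod_lt (x % (n-1) + j) hm0; omega⟩ := by
    intro j x hx
    rw [hσ]
    exact PCR_iter hn v (hvm.trans hv0.symm) j x hx
  have part2 : ∀ w ∈ orbit σ (compSt v), get w 0 ≠ get w (n-1) := by
    rintro w ⟨j, rfl⟩
    rw [get_eq _ 0 (by omega), get_eq _ (n-1) (by omega),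
      hCC j 0 (by omega), hCC j (n-1) (by omega),
      if_neg (show ¬((0:ℕ) = n-1) by omega), if_pos rfl]
    simp only [Nat.zero_mod, Nat.mod_self, Nat.zero_add, add_zero]
    intro heq
    simp at heq
  have part1 : orbit σ (compSt v) ≠ orbit σ v := by
    intro he
    have hv_mem : v ∈ orbit σ (compSt v) := by rw [he]; exact ⟨0, rfl⟩
    exact part2 v hv_mem (h0.trans h1.symm)
  set OC := Finset.univ.filter (fun w : Fin n → F2 => w ∈ orbit σ (compSt v)) with hOC
  set OP := Finset.univ.filter (fun w : Fin n → F2 => w ∈ orbit σ v) with hOP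
  have hOCmem : ∀ w, w ∈ OC ↔ w ∈ orbit σ (compSt v) := by intro w; simp [hOC]
  have hOPmem : ∀ w, w ∈ OP ↔ w ∈ orbit σ v := by intro w; simp [hOP]
  obtain ⟨rC, hrC, hminC⟩ := exists_lexMin OC ⟨compSt v, (hOCmem _).mpr ⟨0, rfl⟩⟩
  obtain ⟨rP, hrP, hminP⟩ := exists_lexMin OP ⟨v, (hOPmem _).mpr ⟨0, rfl⟩⟩
  have hrCo : rC ∈ orbit σ (compSt v) := (hOCmem _).mp hrC
  have hrPo : rP ∈ orbit σ v := (hOPmem _).mp hrP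
  obtain ⟨jC, hjC⟩ := hrCo
  obtain ⟨jP, hjP⟩ := hrPo
  have hrCo' : rC ∈ orbit σ (compSt v) := ⟨jC, hjC⟩
  have hrPo' : rP ∈ orbit σ v := ⟨jP, hjP⟩
  have hcycC : isCycleRep σ rC := by
    rintro w ⟨k, rfl⟩
    refine hminC _ ((hOCmem _).mpr ⟨k + jC, ?_⟩)
    rw [Function.iterate_add_apply, hjC]
  have hcycP : isCycleRep σ rP := by
    rintro w ⟨k, rfl⟩
    refine hminP _ ((hOPmem _).mpr ⟨k + jP, ?_⟩)
    rw [Function.iterate_add_apply, hjP]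
  have hPCR_type : get rP 0 = get rP (n-1) := by
    rw [← hjP, get_eq _ 0 (by omega), get_eq _ (n-1) (by omega),
      hPC jP 0 (by omega), hPC jP (n-1) (by omega)]
    apply app_congr
    rw [Nat.zero_mod, Nat.mod_self]
  have hne : rC ≠ rP := fun he => part2 rC hrCo' (by rw [he]; exact hPCR_type)
  set i0 := jP % (n-1) with hi0
  have hi0m : i0 < n - 1 := Nat.mod_lt _ hm0
  have hrP0 : rP ⟨0, by omega⟩ = v ⟨i0, by omega⟩ := by
    rw [← hjP, hPC jP 0 (by omega)]
    apply app_congr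
    rw [Nat.zero_mod, Nat.zero_add, ← hi0]
  rcases F2cases (v ⟨i0, by omega⟩) with hz | ho
  · -- rP starts with 0 ; i0 ≥ 1
    have hi01 : 1 ≤ i0 := by
      rcases Nat.eq_zero_or_pos i0 with h | h
      · exfalso
        simp only [h] at hz
        rw [hz] at hv0
        exact absurd hv0 (by decide)
      · exact h
    have humem : σ^[i0] (compSt v) ∈ orbit σ (compSt v) := ⟨i0, rfl⟩
    have hpre : ∀ i : Fin n, i < ⟨n-1-i0, by omega⟩ →
        σ^[i0] (compSt v) i = rP i := by
      intro i hij
      have hic : (i:ℕ) < n-1-i0 := hij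
      have e1 := hCC i0 i.val i.isLt
      have e2 := hPC jP i.val i.isLt
      simp only [Fin.eta] at e1 e2
      rw [e1, ← hjP, e2,
        if_neg (show ¬((i:ℕ) = n-1) by omega)]
      simp only [Nat.mod_eq_of_lt (show (i:ℕ) < n-1 by omega)]
      rw [Nat.div_eq_of_lt (show (i:ℕ) + i0 < n-1 by omega), Nat.cast_zero, add_zero, add_zero]
      apply app_congr
      rw [Nat.mod_eq_of_lt (show (i:ℕ) + i0 < n-1 by omega), Nat.add_mod,
        ← hi0, Nat.mod_eq_of_lt (show (i:ℕ) < n-1 by omega),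
        Nat.mod_eq_of_lt (show (i:ℕ) + i0 < n-1 by omega)]
    have hvu : σ^[i0] (compSt v) ⟨n-1-i0, by omega⟩ = 0 := by
      have e := hCC i0 (n-1-i0) (by omega)
      rw [if_neg (show ¬(n-1-i0 = n-1) by omega)] at e
      simp only [Nat.mod_eq_of_lt (show n-1-i0 < n-1 by omega),
        show n-1-i0+i0 = n-1 from by omega] at e
      simp only [Nat.mod_self, Nat.div_self hm0, Nat.cast_one, add_zero] at e
      rw [e, hv0]
      decide
    have hwrP : rP ⟨n-1-i0, by omega⟩ = 1 := by
      have e2 := hPC jP (n-1-i0) (by omega)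
      have hnat : ((n-1-i0) % (n-1) + jP) % (n-1) = 0 := by
        rw [Nat.mod_add_mod, Nat.add_mod, ← hi0,
          Nat.mod_eq_of_lt (show n-1-i0 < n-1 by omega),
          show n-1-i0+i0 = n-1 from by omega, Nat.mod_self]
      simp only [hnat] at e2
      rw [← hjP, e2, hv0]
    have hlt := lexLt_of_firstDiff (⟨n-1-i0, by omega⟩ : Fin n) hpre hvu hwrP
    refine ⟨part1, part2, rC, rP, hrCo', hcycC, hrPo', hcycP,
      lexLe_trans (hminC _ ((hOCmem _).mpr humem)) hlt.1, hne⟩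
  · -- rP starts with 1, so v is all ones
    have hall : ∀ (x : ℕ) (hx : x < n), x < n-1 → v ⟨x, hx⟩ = 1 := by
      intro x hx hxm
      have hmem : σ^[x] v ∈ OP := (hOPmem _).mpr ⟨x, rfl⟩
      have hle := hminP _ hmem ⟨0, by omega⟩ (by
        intro i hi
        exact absurd (Fin.lt_def.mp hi) (Nat.not_lt_zero _))
      rw [hrP0, ho] at hle
      have e := hPC x 0 (by omega)
      simp only [Nat.zero_mod, Nat.zero_add, Nat.mod_eq_of_lt hxm] at e
      rw [e] at hle
      rcases F2cases (v ⟨x, hx⟩) with h | h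
      · rw [h] at hle; exact absurd hle (by decide)
      · exact h
    have hrPall : ∀ i : Fin n, rP i = 1 := by
      intro i
      have e := hPC jP i.val i.isLt
      simp only [Fin.eta] at e
      rw [← hjP, e]
      exact hall _ _ (Nat.mod_lt _ hm0)
    have humem : σ^[n-1] (compSt v) ∈ orbit σ (compSt v) := ⟨n-1, rfl⟩
    have hvu : σ^[n-1] (compSt v) ⟨0, by omega⟩ = 0 := by
      have e := hCC (n-1) 0 (by omega)
      rw [if_neg (show ¬((0:ℕ) = n-1) by omega)] at e
      simp only [Nat.zero_mod, Nat.zero_add, Nat.mod_self, Nat.div_self hm0,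
        Nat.cast_one, add_zero] at e
      rw [e, hv0]
      decide
    have hpre : ∀ i : Fin n, i < ⟨0, by omega⟩ → σ^[n-1] (compSt v) i = rP i := by
      intro i hi
      exact absurd (Fin.lt_def.mp hi) (Nat.not_lt_zero _)
    have hlt := lexLt_of_firstDiff (⟨0, by omega⟩ : Fin n) hpre hvu (hrPall _)
    refine ⟨part1, part2, rC, rP, hrCo', hcycC, hrPo', hcycP,
      lexLe_trans (hminC _ ((hOCmem _).mpr humem)) hlt.1, hne⟩
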